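/- If A, B, C are n×n complex matrices such that the 2n×2n block matrix [[A, B], [B*, C]] is positive semidefinite, then for every j, 2·s_j(B) ≤ s_j([[A, B], [B*, C]]), where s_j denotes the j-th largest singular value. -/

import Mathlib

open Matrix
open scoped ComplexOrder

/-- The positive semidefinite square root of a positive semidefinite matrix (the definition
that Mathlib had as `Matrix.PosSemidef.sqrt`, since removed). -/
noncomputable def Matrix.PosSemidef.sqrt {n 𝕜 : Type*} [Fintype n] [DecidableEq n] [RCLike 𝕜]
    {A : Matrix n n 𝕜} (hA : A.PosSemidef) : Matrix n n 𝕜 :=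
  hA.1.eigenvectorUnitary.1 * Matrix.diagonal ((↑) ∘ (√·) ∘ hA.1.eigenvalues) *
  (star hA.1.eigenvectorUnitary : Matrix n n 𝕜)

theorem Matrix.PosSemidef.posSemidef_sqrt {n 𝕜 : Type*} [Fintype n] [DecidableEq n] [RCLike 𝕜]
    {A : Matrix n n 𝕜} (hA : A.PosSemidef) : hA.sqrt.PosSemidef := by
  unfold Matrix.PosSemidef.sqrt
  apply Matrix.PosSemidef.mul_mul_conjTranspose_same
  refine Matrix.posSemidef_diagonal_iff.mpr fun i ↦ ?_
  rw [Function.comp_apply, RCLike.nonneg_iff]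
  constructor
  · simp only [RCLike.ofReal_re]
    exact Real.sqrt_nonneg _
  · simp only [RCLike.ofReal_im]

/-- The `j`-th largest singular value of a square complex matrix (`j : Fin m`, zero-indexed,
so `sv A 0` is the largest singular value). It is defined as the square root of the `j`-th
largest eigenvalue of `Aᴴ * A`. -/
noncomputable def sv {m : ℕ} (A : Matrix (Fin m) (Fin m) ℂ) (j : Fin m) : ℝ :=
  Real.sqrt ((Matrix.isHermitian_conjTranspose_mul_self A).eigenvalues
    (Tuple.sort ((Matrix.isHermitian_conjTranspose_mul_self A).eigenvalues) j.rev))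

/-- The absolute value `|A| = (Aᴴ A)^{1/2}` of a square complex matrix. -/
noncomputable def matAbs {m : ℕ} (A : Matrix (Fin m) (Fin m) ℂ) : Matrix (Fin m) (Fin m) ℂ :=
  (Matrix.posSemidef_conjTranspose_mul_self A).sqrt

/-- The `2n × 2n` block matrix `[[A, B], [C, D]]`, reindexed by `Fin (n + n)`. -/
noncomputable def blk {n : ℕ} (A B C D : Matrix (Fin n) (Fin n) ℂ) :
    Matrix (Fin (n + n)) (Fin (n + n)) ℂ :=
  Matrix.reindex finSumFinEquiv finSumFinEquiv (Matrix.fromBlocks A B C D)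

/-- `f(P)` for a Hermitian matrix `P`, via the spectral functional calculus. -/
noncomputable def herCfc {m : ℕ} {P : Matrix (Fin m) (Fin m) ℂ} (hP : P.IsHermitian)
    (f : ℝ → ℝ) : Matrix (Fin m) (Fin m) ℂ :=
  hP.cfc f

/-- `|A| ^ r` (real power of the absolute value), via the functional calculus. -/
noncomputable def matAbsPow {m : ℕ} (A : Matrix (Fin m) (Fin m) ℂ) (r : ℝ) :
    Matrix (Fin m) (Fin m) ℂ :=
  herCfc (Matrix.posSemidef_conjTranspose_mul_self A).posSemidef_sqrt.1 (fun t => t ^ r)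

/-- `f(|A|)`, via the functional calculus. -/
noncomputable def matAbsCfc {m : ℕ} (A : Matrix (Fin m) (Fin m) ℂ) (f : ℝ → ℝ) :
    Matrix (Fin m) (Fin m) ℂ :=
  herCfc (Matrix.posSemidef_conjTranspose_mul_self A).posSemidef_sqrt.1 f

/-- The operator norm: the largest singular value. -/
noncomputable def opNorm {m : ℕ} (A : Matrix (Fin m) (Fin m) ℂ) : ℝ :=
  ⨆ j, sv A j


namespace TaoAux
open Matrix
open scoped ComplexOrder

variable {m : ℕ}

/-! ### Quadratic form basics -/

noncomputable def qf (P : Matrix (Fin m) (Fin m) ℂ) (x : Fin m → ℂ) : ℝ :=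
  Complex.re (dotProduct (star x) (P *ᵥ x))

noncomputable def nsq (x : Fin m → ℂ) : ℝ := Complex.re (dotProduct (star x) x)

lemma nsq_eq (x : Fin m → ℂ) : nsq x = ∑ i, Complex.normSq (x i) := by
  simp [nsq, dotProduct, Complex.re_sum, Pi.star_apply,
    Complex.normSq_eq_conj_mul_self, Complex.normSq_apply]

lemma nsq_pos {x : Fin m → ℂ} (hx : x ≠ 0) : 0 < nsq x := by
  rcases Function.ne_iff.1 hx with ⟨i, hi⟩
  rw [nsq_eq]
  refine Finset.sum_pos' (fun j _ => Complex.normSq_nonneg _) ⟨i, Finset.mem_univ i, ?_⟩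
  simpa [Complex.normSq_pos] using hi

lemma qf_mono {P Q : Matrix (Fin m) (Fin m) ℂ} (h : (Q - P).PosSemidef) (x : Fin m → ℂ) :
    qf P x ≤ qf Q x := by
  have h0 := h.dotProduct_mulVec_nonneg x
  rw [sub_mulVec, dotProduct_sub] at h0
  have := (Complex.le_def.1 h0).1
  simp only [Complex.zero_re, Complex.sub_re] at this
  unfold qf
  linarith

lemma sum_dotProduct' {ι : Type*} (s : Finset ι) (f : ι → (Fin m → ℂ)) (w : Fin m → ℂ) :
    dotProduct (∑ i ∈ s, f i) w = ∑ i ∈ s, dotProduct (f i) w := by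
  simp only [dotProduct, Finset.sum_apply, Finset.sum_mul]
  exact Finset.sum_comm

lemma dotProduct_sum' {ι : Type*} (s : Finset ι) (w : Fin m → ℂ) (f : ι → (Fin m → ℂ)) :
    dotProduct w (∑ i ∈ s, f i) = ∑ i ∈ s, dotProduct w (f i) := by
  simp only [dotProduct, Finset.sum_apply, Finset.mul_sum]
  exact Finset.sum_comm

/-! ### Rayleigh quotient bounds on spans of scaled-orthonormal eigenvectors -/

variable {ι : Type*} [DecidableEq ι]

lemma hdot (S : Finset ι) (v : ι → (Fin m → ℂ)) (ρ : ℝ)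
    (hortho : ∀ i ∈ S, ∀ i' ∈ S, dotProduct (star (v i)) (v i') = if i = i' then (ρ : ℂ) else 0)
    (g h : {i // i ∈ (S : Set ι)} → ℂ) :
    dotProduct (star (∑ i, g i • v ↑i)) (∑ i, h i • v ↑i)
      = ∑ i, (starRingEnd ℂ) (g i) * h i * ρ := by
  rw [star_sum, sum_dotProduct']
  refine Finset.sum_congr rfl fun i _ => ?_
  rw [dotProduct_sum', Finset.sum_eq_single i]
  · rw [star_smul, smul_dotProduct, dotProduct_smul,
      hortho i i.2 i i.2, if_pos rfl]
    simp only [smul_eq_mul, starRingEnd_apply]; ring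
  · intro j _ hji
    rw [star_smul, smul_dotProduct, dotProduct_smul,
      hortho i i.2 j j.2, if_neg (fun hh => hji (Subtype.ext hh).symm)]
    simp
  · simp

lemma ray_ge (P : Matrix (Fin m) (Fin m) ℂ) (S : Finset ι)
    (v : ι → (Fin m → ℂ)) (μ : ι → ℝ) (ρ : ℝ) (hρ : 0 ≤ ρ)
    (hortho : ∀ i ∈ S, ∀ i' ∈ S, dotProduct (star (v i)) (v i') = if i = i' then (ρ : ℂ) else 0)
    (heig : ∀ i ∈ S, P *ᵥ v i = (μ i : ℂ) • v i)
    (c : ℝ) (hc : ∀ i ∈ S, c ≤ μ i) :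
    ∀ x ∈ Submodule.span ℂ (v '' S), c * nsq x ≤ qf P x := by
  intro x hx
  rw [Set.image_eq_range] at hx
  obtain ⟨f, rfl⟩ := (Submodule.mem_span_range_iff_exists_fun ℂ).1 hx
  have hPx : P *ᵥ (∑ i : {i // i ∈ (S : Set ι)}, f i • v ↑i)
      = ∑ i : {i // i ∈ (S : Set ι)}, ((μ ↑i : ℂ) * f i) • v ↑i := by
    rw [← Matrix.mulVecLin_apply, map_sum]
    refine Finset.sum_congr rfl fun i _ => ?_
    rw [_root_.map_smul, Matrix.mulVecLin_apply, heig i i.2, smul_smul, mul_comm]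
  have e1 : qf P (∑ i : {i // i ∈ (S : Set ι)}, f i • v ↑i)
      = ∑ i : {i // i ∈ (S : Set ι)}, μ ↑i * (Complex.normSq (f i) * ρ) := by
    unfold qf
    rw [hPx, hdot S v ρ hortho f (fun i => (μ ↑i : ℂ) * f i), Complex.re_sum]
    refine Finset.sum_congr rfl fun i _ => ?_
    have : (starRingEnd ℂ) (f i) * ((μ ↑i : ℂ) * f i) * (ρ:ℂ)
        = (μ ↑i : ℂ) * ((Complex.normSq (f i) : ℂ) * (ρ:ℂ)) := by
      rw [Complex.normSq_eq_conj_mul_self]; ring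
    rw [this]
    push_cast
    simp
  have e2 : nsq (∑ i : {i // i ∈ (S : Set ι)}, f i • v ↑i)
      = ∑ i : {i // i ∈ (S : Set ι)}, Complex.normSq (f i) * ρ := by
    unfold nsq
    rw [hdot S v ρ hortho f f, Complex.re_sum]
    refine Finset.sum_congr rfl fun i _ => ?_
    have : (starRingEnd ℂ) (f i) * f i = (Complex.normSq (f i) : ℂ) := by
      rw [Complex.normSq_eq_conj_mul_self]
    rw [this, ← Complex.ofReal_mul, Complex.ofReal_re]
  rw [e1, e2, Finset.mul_sum]
  refine Finset.sum_le_sum fun i _ => ?_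
  exact mul_le_mul_of_nonneg_right (hc ↑i i.2)
    (mul_nonneg (Complex.normSq_nonneg _) hρ)

lemma ray_le (P : Matrix (Fin m) (Fin m) ℂ) (S : Finset ι)
    (v : ι → (Fin m → ℂ)) (μ : ι → ℝ) (ρ : ℝ) (hρ : 0 ≤ ρ)
    (hortho : ∀ i ∈ S, ∀ i' ∈ S, dotProduct (star (v i)) (v i') = if i = i' then (ρ : ℂ) else 0)
    (heig : ∀ i ∈ S, P *ᵥ v i = (μ i : ℂ) • v i)
    (c : ℝ) (hc : ∀ i ∈ S, μ i ≤ c) :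
    ∀ x ∈ Submodule.span ℂ (v '' S), qf P x ≤ c * nsq x := by
  intro x hx
  have := ray_ge (-P) S v (fun i => -(μ i)) ρ hρ hortho
    (fun i hi => by rw [Matrix.neg_mulVec, heig i hi]; push_cast; rw [neg_smul])
    (-c) (fun i hi => neg_le_neg (hc i hi)) x hx
  have hq : qf (-P) x = - qf P x := by
    unfold qf; rw [Matrix.neg_mulVec, dotProduct_neg, Complex.neg_re]
  rw [hq, neg_mul] at this
  linarith

/-! ### Dimension counting -/

lemma lin_indep (S : Finset ι) (v : ι → (Fin m → ℂ)) (ρ : ℝ) (hρ : 0 < ρ)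
    (hortho : ∀ i ∈ S, ∀ i' ∈ S, dotProduct (star (v i)) (v i') = if i = i' then (ρ : ℂ) else 0) :
    LinearIndependent ℂ (fun i : {i // i ∈ (S : Set ι)} => v ↑i) := by
  rw [Fintype.linearIndependent_iff]
  intro g hg j
  have h0 : dotProduct (star (v ↑j)) (∑ i : {i // i ∈ (S : Set ι)}, g i • v ↑i) = 0 := by
    rw [hg, dotProduct_zero]
  have e : dotProduct (star (v ↑j)) (∑ i : {i // i ∈ (S : Set ι)}, g i • v ↑i)
      = g j * ρ := by
    rw [dotProduct_sum']
    rw [Finset.sum_eq_single j]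
    · rw [dotProduct_smul, hortho j j.2 j j.2, if_pos rfl, smul_eq_mul]
    · intro b _ hbj
      rw [dotProduct_smul, hortho j j.2 b b.2,
        if_neg (fun hh => hbj (Subtype.ext hh).symm), smul_zero]
    · simp
  rw [e] at h0
  rcases mul_eq_zero.1 h0 with h | h
  · exact h
  · exact absurd h (by exact_mod_cast hρ.ne')

lemma finrank_span_eq (S : Finset ι) (v : ι → (Fin m → ℂ)) (ρ : ℝ) (hρ : 0 < ρ)
    (hortho : ∀ i ∈ S, ∀ i' ∈ S, dotProduct (star (v i)) (v i') = if i = i' then (ρ : ℂ) else 0) :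
    Module.finrank ℂ (Submodule.span ℂ (v '' S)) = S.card := by
  rw [Set.image_eq_range]
  rw [finrank_span_eq_card (lin_indep S v ρ hρ hortho)]
  simp

lemma intersect (W E : Submodule ℂ (Fin m → ℂ))
    (h : m < Module.finrank ℂ W + Module.finrank ℂ E) :
    ∃ x : Fin m → ℂ, x ≠ 0 ∧ x ∈ W ∧ x ∈ E := by
  have hsup : Module.finrank ℂ ↥(W ⊔ E) ≤ m := by
    simpa [Module.finrank_fin_fun] using Submodule.finrank_le (W ⊔ E)
  have heq := Submodule.finrank_sup_add_finrank_inf_eq W E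
  have hpos : 0 < Module.finrank ℂ ↥(W ⊓ E) := by omega
  have hne : W ⊓ E ≠ ⊥ := by
    intro hb
    rw [hb, finrank_bot] at hpos
    exact lt_irrefl 0 hpos
  obtain ⟨x, hx, hx0⟩ := Submodule.exists_mem_ne_zero_of_ne_bot hne
  exact ⟨x, hx0, (Submodule.mem_inf.1 hx).1, (Submodule.mem_inf.1 hx).2⟩

/-! ### Sorted eigenvalues and eigenvectors -/

variable {P : Matrix (Fin m) (Fin m) ℂ}

noncomputable def sE (hP : P.IsHermitian) : Fin m → ℝ :=
  hP.eigenvalues ∘ ⇑(Tuple.sort hP.eigenvalues)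

noncomputable def sV (hP : P.IsHermitian) : Fin m → (Fin m → ℂ) :=
  fun i => ⇑(hP.eigenvectorBasis (Tuple.sort hP.eigenvalues i))

lemma sE_monotone (hP : P.IsHermitian) : Monotone (sE hP) :=
  Tuple.monotone_sort hP.eigenvalues

lemma sV_eig (hP : P.IsHermitian) (i : Fin m) :
    P *ᵥ sV hP i = (sE hP i : ℂ) • sV hP i := by
  rw [sV, hP.mulVec_eigenvectorBasis]
  ext k
  simp [sE, Complex.real_smul]

lemma sV_ortho (hP : P.IsHermitian) (i i' : Fin m) :
    dotProduct (star (sV hP i)) (sV hP i') = if i = i' then (1 : ℂ) else 0 := by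
  have h := hP.eigenvectorBasis.orthonormal
  rw [orthonormal_iff_ite] at h
  have := h (Tuple.sort hP.eigenvalues i) (Tuple.sort hP.eigenvalues i')
  rw [EuclideanSpace.inner_eq_star_dotProduct] at this
  rw [sV, sV]
  refine (dotProduct_comm _ _).trans (this.trans ?_)
  simp [Equiv.apply_eq_iff_eq]

/-- One direction of Courant–Fischer: a `(m - k)`-dimensional-or-bigger subspace on which the
Rayleigh quotient is at least `c` forces `c ≤ sE hP k`. -/
lemma le_sE (hP : P.IsHermitian) (k : Fin m) (W : Submodule ℂ (Fin m → ℂ)) (c : ℝ)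
    (hdim : m ≤ Module.finrank ℂ W + (k : ℕ))
    (hW : ∀ x ∈ W, c * nsq x ≤ qf P x) : c ≤ sE hP k := by
  set E := Submodule.span ℂ (sV hP '' (Finset.Iic k : Finset (Fin m))) with hE
  have hEr : Module.finrank ℂ E = (k : ℕ) + 1 := by
    rw [hE, finrank_span_eq (Finset.Iic k) (sV hP) 1 one_pos
      (fun i _ i' _ => sV_ortho hP i i')]
    rw [Fin.card_Iic]
  obtain ⟨x, hx0, hxW, hxE⟩ := intersect W E (by omega)
  have h1 := hW x hxW
  have h2 := ray_le P (Finset.Iic k) (sV hP) (sE hP) 1 one_pos.le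
    (fun i _ i' _ => sV_ortho hP i i') (fun i _ => sV_eig hP i)
    (sE hP k) (fun i hi => sE_monotone hP (Finset.mem_Iic.1 hi)) x hxE
  exact le_of_mul_le_mul_right (h1.trans h2) (nsq_pos hx0)

lemma sE_nonneg (hP : P.PosSemidef) (i : Fin m) : 0 ≤ sE hP.1 i :=
  hP.eigenvalues_nonneg _

/-- For a PSD matrix, `(sE hP k)^2 ≤ sE (PᴴP) k`. -/
lemma sE_sq_le (hP : P.PosSemidef) (k : Fin m) :
    (sE hP.1 k) ^ 2 ≤ sE (Matrix.isHermitian_conjTranspose_mul_self P) k := by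
  refine le_sE (Matrix.isHermitian_conjTranspose_mul_self P) k
    (Submodule.span ℂ (sV hP.1 '' (Finset.Ici k : Finset (Fin m)))) _ ?_ ?_
  · rw [finrank_span_eq (Finset.Ici k) (sV hP.1) 1 one_pos
      (fun i _ i' _ => sV_ortho hP.1 i i'), Fin.card_Ici]
    have := k.2
    omega
  · refine ray_ge (Pᴴ * P) (Finset.Ici k) (sV hP.1) (fun i => (sE hP.1 i) ^ 2) 1 one_pos.le
      (fun i _ i' _ => sV_ortho hP.1 i i') ?_ _ ?_
    · intro i _
      rw [← Matrix.mulVec_mulVec, sV_eig hP.1 i, Matrix.mulVec_smul, hP.1.eq, sV_eig hP.1 i,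
        smul_smul]
      push_cast
      rw [sq]
    · intro i hi
      have h1 := sE_monotone hP.1 (Finset.mem_Ici.1 hi)
      have h2 := sE_nonneg hP k
      nlinarith

/-- For a PSD matrix, `sE hP` at the reversed index is at most the singular value. -/
lemma sE_le_sv (hP : P.PosSemidef) (j : Fin m) : sE hP.1 j.rev ≤ sv P j := by
  have h1 : sv P j = Real.sqrt (sE (Matrix.isHermitian_conjTranspose_mul_self P) j.rev) := rfl
  rw [h1]
  calc sE hP.1 j.rev = Real.sqrt ((sE hP.1 j.rev) ^ 2) :=
        (Real.sqrt_sq (sE_nonneg hP j.rev)).symm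
    _ ≤ _ := Real.sqrt_le_sqrt (sE_sq_le hP j.rev)

/-! ### Block matrices -/

variable {n : ℕ}

noncomputable def pairVec (a b : Fin n → ℂ) : Fin (n + n) → ℂ :=
  Sum.elim a b ∘ ⇑finSumFinEquiv.symm

lemma blk_mulVec (A B C D : Matrix (Fin n) (Fin n) ℂ) (a b : Fin n → ℂ) :
    blk A B C D *ᵥ pairVec a b = pairVec (A *ᵥ a + B *ᵥ b) (C *ᵥ a + D *ᵥ b) := by
  rw [blk, Matrix.reindex_apply, pairVec, Matrix.submatrix_mulVec_equiv]
  have : (Sum.elim a b ∘ ⇑finSumFinEquiv.symm) ∘ ⇑finSumFinEquiv.symm.symm = Sum.elim a b := by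
    ext k; simp
  rw [this, Matrix.fromBlocks_mulVec]
  rfl

lemma pairVec_smul (c : ℂ) (a b : Fin n → ℂ) :
    pairVec (c • a) (c • b) = c • pairVec a b := by
  ext k
  simp only [pairVec, Function.comp_apply, Pi.smul_apply]
  cases finSumFinEquiv.symm k <;> simp

lemma pairVec_dot (a b a' b' : Fin n → ℂ) :
    dotProduct (star (pairVec a b)) (pairVec a' b')
      = dotProduct (star a) a' + dotProduct (star b) b' := by
  have hstar : star (pairVec a b) = pairVec (star a) (star b) := by
    ext k
    simp only [pairVec, Pi.star_apply, Function.comp_apply]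
    cases finSumFinEquiv.symm k <;> simp
  rw [hstar]
  have key : ∀ x y : (Fin n ⊕ Fin n) → ℂ,
      dotProduct (x ∘ ⇑finSumFinEquiv.symm) (y ∘ ⇑finSumFinEquiv.symm) = dotProduct x y := by
    intro x y
    unfold dotProduct
    exact Fintype.sum_equiv finSumFinEquiv.symm _ _ (fun k => rfl)
  rw [pairVec, pairVec, key]
  exact sumElim_dotProduct_sumElim _ _ _ _

lemma blk_sub (A B C D A' B' C' D' : Matrix (Fin n) (Fin n) ℂ) :
    blk A B C D - blk A' B' C' D' = blk (A - A') (B - B') (C - C') (D - D') := by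
  ext i j
  simp only [blk, Matrix.reindex_apply, Matrix.sub_apply, Matrix.submatrix_apply]
  cases finSumFinEquiv.symm i <;> cases finSumFinEquiv.symm j <;> simp [Matrix.fromBlocks]

lemma blk_add (A B C D A' B' C' D' : Matrix (Fin n) (Fin n) ℂ) :
    blk A B C D + blk A' B' C' D' = blk (A + A') (B + B') (C + C') (D + D') := by
  ext i j
  simp only [blk, Matrix.reindex_apply, Matrix.add_apply, Matrix.submatrix_apply]
  cases finSumFinEquiv.symm i <;> cases finSumFinEquiv.symm j <;> simp [Matrix.fromBlocks]

lemma blk_mul (A B C D A' B' C' D' : Matrix (Fin n) (Fin n) ℂ) :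
    blk A B C D * blk A' B' C' D'
      = blk (A * A' + B * C') (A * B' + B * D') (C * A' + D * C') (C * B' + D * D') := by
  rw [blk, blk, blk, Matrix.reindex_apply, Matrix.reindex_apply, Matrix.reindex_apply,
    Matrix.submatrix_mul_equiv, Matrix.fromBlocks_multiply]

lemma blk_conjTranspose (A B C D : Matrix (Fin n) (Fin n) ℂ) :
    (blk A B C D)ᴴ = blk Aᴴ Cᴴ Bᴴ Dᴴ := by
  rw [blk, blk, Matrix.reindex_apply, Matrix.reindex_apply, Matrix.conjTranspose_submatrix,
    Matrix.fromBlocks_conjTranspose]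

end TaoAux

theorem tao_inequality {n : ℕ} (A B C : Matrix (Fin n) (Fin n) ℂ)
    (h : (blk A B Bᴴ C).PosSemidef) :
    ∀ j : Fin n, 2 * sv B j ≤ sv (blk A B Bᴴ C) (Fin.castAdd n j) := by
  intro j
  set M : Matrix (Fin (n + n)) (Fin (n + n)) ℂ := blk A B Bᴴ C with hMdef
  have hQ : (Bᴴ * B).IsHermitian := Matrix.isHermitian_conjTranspose_mul_self B
  set r : Fin n := j.rev with hrdef
  set s : Fin n → ℝ := fun i => Real.sqrt (TaoAux.sE hQ i) with hsdef
  have hsv : sv B j = s r := rfl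
  by_cases h0 : 0 < s r
  swap
  · have hz : s r = 0 := le_antisymm (not_lt.1 h0) (Real.sqrt_nonneg _)
    rw [hsv, hz, mul_zero]
    exact Real.sqrt_nonneg _
  · set v : Fin n → (Fin n → ℂ) := TaoAux.sV hQ with hvdef
    have hμnn : ∀ i, 0 ≤ TaoAux.sE hQ i := fun i =>
      (Matrix.posSemidef_conjTranspose_mul_self B).eigenvalues_nonneg _
    have hs_sq : ∀ i, (s i) ^ 2 = TaoAux.sE hQ i := fun i => Real.sq_sqrt (hμnn i)
    have hsmono : Monotone s := fun a b hab =>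
      Real.sqrt_le_sqrt (TaoAux.sE_monotone hQ hab)
    have hspos : ∀ i ∈ Finset.Ici r, 0 < s i := fun i hi =>
      lt_of_lt_of_le h0 (hsmono (Finset.mem_Ici.1 hi))
    set u : Fin n → (Fin n → ℂ) := fun i => ((s i : ℂ))⁻¹ • (B *ᵥ v i) with hudef
    set g : Fin n → (Fin (n + n) → ℂ) := fun i => TaoAux.pairVec (u i) (v i) with hgdef
    have hBdot : ∀ i i', dotProduct (star (B *ᵥ v i)) (B *ᵥ v i')
        = if i = i' then ((TaoAux.sE hQ i' : ℝ) : ℂ) else 0 := by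
      intro i i'
      rw [Matrix.star_mulVec, ← Matrix.dotProduct_mulVec, Matrix.mulVec_mulVec,
        TaoAux.sV_eig hQ i', dotProduct_smul, TaoAux.sV_ortho hQ i i']
      by_cases hii : i = i' <;> simp [hii]
    have hudot : ∀ i ∈ Finset.Ici r, ∀ i' ∈ Finset.Ici r,
        dotProduct (star (u i)) (u i') = if i = i' then 1 else 0 := by
      intro i hi i' hi'
      rw [hudef]
      simp only
      rw [star_smul, smul_dotProduct, dotProduct_smul, hBdot i i']
      by_cases hii : i = i'
      · subst hii
        have hne : (s i : ℂ) ≠ 0 := by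
          exact_mod_cast (hspos i hi).ne'
        rw [if_pos rfl, if_pos rfl, ← hs_sq i]
        simp only [smul_eq_mul, star_inv₀, Complex.star_def, Complex.conj_ofReal]
        push_cast
        field_simp
      · rw [if_neg hii, if_neg hii, smul_zero, smul_zero]
    have hgdot2 : ∀ i ∈ Finset.Ici r, ∀ i' ∈ Finset.Ici r,
        dotProduct (star (g i)) (g i') = if i = i' then ((2 : ℝ) : ℂ) else 0 := by
      intro i hi i' hi'
      rw [hgdef]
      simp only
      rw [TaoAux.pairVec_dot, hudot i hi i' hi', TaoAux.sV_ortho hQ i i']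
      by_cases hii : i = i' <;> simp [hii]
      norm_num
    set T : Matrix (Fin (n + n)) (Fin (n + n)) ℂ := blk 0 B Bᴴ 0 with hTdef
    have hTg : ∀ i ∈ Finset.Ici r, (T + T) *ᵥ g i = ((2 * s i : ℝ) : ℂ) • g i := by
      intro i hi
      have hne : (s i : ℂ) ≠ 0 := by exact_mod_cast (hspos i hi).ne'
      have h1 : T *ᵥ g i = ((s i : ℝ) : ℂ) • g i := by
        rw [hgdef]
        simp only
        rw [hTdef, TaoAux.blk_mulVec]
        have e1 : (0 : Matrix (Fin n) (Fin n) ℂ) *ᵥ u i + B *ᵥ v i = (s i : ℂ) • u i := by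
          rw [Matrix.zero_mulVec, zero_add, hudef]
          simp only
          rw [smul_smul, mul_inv_cancel₀ hne, one_smul]
        have e2 : Bᴴ *ᵥ u i + (0 : Matrix (Fin n) (Fin n) ℂ) *ᵥ v i = (s i : ℂ) • v i := by
          rw [Matrix.zero_mulVec, add_zero, hudef]
          simp only
          rw [Matrix.mulVec_smul, Matrix.mulVec_mulVec, TaoAux.sV_eig hQ i, smul_smul,
            ← hs_sq i]
          push_cast
          rw [sq, inv_mul_cancel_left₀ hne]
        rw [e1, e2, TaoAux.pairVec_smul]
      rw [Matrix.add_mulVec, h1, ← add_smul]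
      push_cast
      rw [two_mul]
    have hpsd : (M - (T + T)).PosSemidef := by
      have hL : M - (T + T) = blk A (-B) (-Bᴴ) C := by
        rw [hMdef, hTdef, TaoAux.blk_add, TaoAux.blk_sub, show A - ((0:Matrix (Fin n) (Fin n) ℂ) + 0) = A by abel,
          show C - ((0:Matrix (Fin n) (Fin n) ℂ) + 0) = C by abel,
          show B - (B + B) = -B by abel, show Bᴴ - (Bᴴ + Bᴴ) = -Bᴴ by abel]
      have hR : blk (1 : Matrix (Fin n) (Fin n) ℂ) 0 0 (-1) * M
          * (blk (1 : Matrix (Fin n) (Fin n) ℂ) 0 0 (-1))ᴴ = blk A (-B) (-Bᴴ) C := by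
        rw [hMdef, TaoAux.blk_conjTranspose, TaoAux.blk_mul, TaoAux.blk_mul]
        simp only [Matrix.conjTranspose_one, Matrix.conjTranspose_zero,
          Matrix.conjTranspose_neg, Matrix.one_mul, Matrix.mul_one, Matrix.zero_mul,
          Matrix.mul_zero, Matrix.mul_neg, Matrix.neg_mul, add_zero, zero_add, neg_neg,
          neg_zero]
      rw [hL, ← hR]
      exact h.mul_mul_conjTranspose_same _
    set k : Fin (n + n) := (Fin.castAdd n j).rev with hkdef
    have hkey : 2 * sv B j ≤ TaoAux.sE h.1 k := by
      refine TaoAux.le_sE h.1 k (Submodule.span ℂ (g '' (Finset.Ici r : Finset (Fin n))))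
        _ ?_ ?_
      · rw [TaoAux.finrank_span_eq (Finset.Ici r) g 2 two_pos hgdot2, Fin.card_Ici]
        have hj := j.2
        have h1 : (r : ℕ) = n - (j + 1) := by rw [hrdef, Fin.val_rev]
        have h2 : (k : ℕ) = (n + n) - (j + 1) := by
          rw [hkdef, Fin.val_rev, Fin.coe_castAdd]
        omega
      · intro x hx
        have hray := TaoAux.ray_ge (T + T) (Finset.Ici r) g (fun i => 2 * s i) 2
          (by norm_num) hgdot2 hTg (2 * sv B j)
          (fun i hi => by
            rw [hsv]
            exact mul_le_mul_of_nonneg_left (hsmono (Finset.mem_Ici.1 hi)) (by norm_num))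
          x hx
        exact hray.trans (TaoAux.qf_mono hpsd x)
    exact hkey.trans (TaoAux.sE_le_sv h (Fin.castAdd n j))
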